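/- Let C¹, C² ⊆ ℝⁿ be nonempty closed convex sets whose support functions have identical domains D = dom σ_{C¹} = dom σ_{C²}. Then the Hausdorff distance between C¹ and C² equals sup_{d ∈ D ∩ B} |σ_{C¹}(d) − σ_{C²}(d)|, where B is the closed Euclidean unit ball. -/

import Mathlib

open scoped InnerProductSpace Pointwise ENNReal
open Metric Filter

/-- The support function `σ_C(d) = sup_{x ∈ C} ⟪d, x⟫` of a set `C ⊆ ℝⁿ`,
with values in the extended reals. -/
noncomputable def suppFun {n : ℕ} (C : Set (EuclideanSpace ℝ (Fin n)))
    (d : EuclideanSpace ℝ (Fin n)) : EReal :=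
  ⨆ x ∈ C, ((⟪d, x⟫_ℝ : ℝ) : EReal)

/-- The effective domain `dom σ_C = {d : σ_C(d) < +∞}` of the support function. -/
def suppDom {n : ℕ} (C : Set (EuclideanSpace ℝ (Fin n))) :
    Set (EuclideanSpace ℝ (Fin n)) :=
  {d | suppFun C d < ⊤}

/-- The recession cone `rec C` of a set `C`. -/
def recCone {n : ℕ} (C : Set (EuclideanSpace ℝ (Fin n))) :
    Set (EuclideanSpace ℝ (Fin n)) :=
  {y | ∀ x ∈ C, ∀ t : ℝ, 0 ≤ t → x + t • y ∈ C}

/-- The truncation `C_r = (C ∩ rB) + rec C` of `C` of radius `r`. -/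
def trunc {n : ℕ} (C : Set (EuclideanSpace ℝ (Fin n))) (r : ℝ) :
    Set (EuclideanSpace ℝ (Fin n)) :=
  (C ∩ closedBall 0 r) + recCone C

/-- `C` is approximately M-decomposable: for every `ε > 0` there is `r > 0`
with `C ⊆ C_r + εB`. -/
def ApproxMDecomposable {n : ℕ} (C : Set (EuclideanSpace ℝ (Fin n))) : Prop :=
  ∀ ε > (0 : ℝ), ∃ r > (0 : ℝ), C ⊆ trunc C r + closedBall 0 ε

/-- `C` is M-decomposable: `C = M + rec C` for some compact convex `M`. -/
def MDecomposable {n : ℕ} (C : Set (EuclideanSpace ℝ (Fin n))) : Prop :=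
  ∃ M : Set (EuclideanSpace ℝ (Fin n)), IsCompact M ∧ Convex ℝ M ∧ C = M + recCone C

/-- `C` is hyperbolic: `C ⊆ M + rec C` for some compact convex `M`. -/
def Hyperbolic {n : ℕ} (C : Set (EuclideanSpace ℝ (Fin n))) : Prop :=
  ∃ M : Set (EuclideanSpace ℝ (Fin n)), IsCompact M ∧ Convex ℝ M ∧ C ⊆ M + recCone C

/-- The polar cone `K° = {d : ⟪d, x⟫ ≤ 0 for all x ∈ K}` of a cone `K`. -/
def polarCone {n : ℕ} (K : Set (EuclideanSpace ℝ (Fin n))) :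
    Set (EuclideanSpace ℝ (Fin n)) :=
  {d | ∀ x ∈ K, ⟪d, x⟫_ℝ ≤ 0}

section Aux
variable {n : ℕ}

lemma coe_le_suppFun {C : Set (EuclideanSpace ℝ (Fin n))} {x : EuclideanSpace ℝ (Fin n)}
    (hx : x ∈ C) (d : EuclideanSpace ℝ (Fin n)) :
    ((⟪d, x⟫_ℝ : ℝ) : EReal) ≤ suppFun C d :=
  le_iSup₂ (f := fun y (_ : y ∈ C) => ((⟪d, y⟫_ℝ : ℝ) : EReal)) x hx

lemma suppFun_ne_bot {C : Set (EuclideanSpace ℝ (Fin n))} (h : C.Nonempty)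
    (d : EuclideanSpace ℝ (Fin n)) : suppFun C d ≠ ⊥ := by
  obtain ⟨x, hx⟩ := h
  exact fun hb => absurd (hb ▸ coe_le_suppFun hx d) (by simp)

lemma suppFun_le {C : Set (EuclideanSpace ℝ (Fin n))} {d : EuclideanSpace ℝ (Fin n)} {r : ℝ}
    (h : ∀ x ∈ C, ⟪d, x⟫_ℝ ≤ r) : suppFun C d ≤ (r : EReal) :=
  iSup₂_le fun x hx => EReal.coe_le_coe_iff.2 (h x hx)

lemma exists_sep {A : Set (EuclideanSpace ℝ (Fin n))} (hAne : A.Nonempty)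
    (hAcl : IsClosed A) (hAconv : Convex ℝ A) (x : EuclideanSpace ℝ (Fin n)) :
    ∃ d : EuclideanSpace ℝ (Fin n), ‖d‖ ≤ 1 ∧ ∃ r : ℝ, suppFun A d = (r : EReal) ∧
      r ≤ ⟪d, x⟫_ℝ ∧ EMetric.infEdist x A ≤ ENNReal.ofReal (⟪d, x⟫_ℝ - r) := by
  obtain ⟨v, hv, hvp⟩ := exists_norm_eq_iInf_of_complete_convex hAne hAcl.isComplete hAconv x
  rw [norm_eq_iInf_iff_real_inner_le_zero hAconv hv] at hvp
  by_cases hxv : x = v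
  · refine ⟨0, by simp, 0, ?_, by simp, ?_⟩
    · have : suppFun A 0 = ⨆ y ∈ A, ((0:ℝ) : EReal) := by
        simp [suppFun, inner_zero_left]
      rw [this, biSup_const hAne]
    · subst hxv
      have h0 : EMetric.infEdist x A ≤ edist x x := EMetric.infEdist_le_edist_of_mem hv
      simpa using h0
  · set t : ℝ := ‖x - v‖ with htdef
    have ht0 : 0 < t := by
      rw [htdef, norm_pos_iff]
      exact sub_ne_zero_of_ne hxv
    set d : EuclideanSpace ℝ (Fin n) := t⁻¹ • (x - v) with hddef
    have hd1 : ‖d‖ = 1 := by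
      rw [hddef, norm_smul, norm_inv, Real.norm_eq_abs, abs_of_pos ht0, ← htdef,
        inv_mul_cancel₀ ht0.ne']
    have hkey : ⟪d, x⟫_ℝ - ⟪d, v⟫_ℝ = t := by
      rw [← inner_sub_right, hddef, real_inner_smul_left, real_inner_self_eq_norm_sq, ← htdef]
      field_simp
    have hdw : ∀ w ∈ A, ⟪d, w⟫_ℝ ≤ ⟪d, v⟫_ℝ := by
      intro w hw
      have h1 : ⟪x - v, w - v⟫_ℝ ≤ 0 := hvp w hw
      have h2 : ⟪d, w - v⟫_ℝ ≤ 0 := by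
        rw [hddef, real_inner_smul_left]
        have : (0:ℝ) < t⁻¹ := inv_pos.2 ht0
        nlinarith
      have := inner_sub_right (𝕜 := ℝ) d w v
      linarith [h2, this ▸ h2]
    refine ⟨d, le_of_eq hd1, ⟪d, v⟫_ℝ, ?_, by linarith, ?_⟩
    · exact le_antisymm (suppFun_le hdw) (coe_le_suppFun hv d)
    · calc EMetric.infEdist x A ≤ edist x v := EMetric.infEdist_le_edist_of_mem hv
        _ = ENNReal.ofReal (⟪d, x⟫_ℝ - ⟪d, v⟫_ℝ) := by
            rw [hkey, edist_dist, dist_eq_norm, ← htdef]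

lemma suppFun_le_add_haus {A C : Set (EuclideanSpace ℝ (Fin n))}
    {d : EuclideanSpace ℝ (Fin n)} (hd : ‖d‖ ≤ 1) {rA : ℝ}
    (hrA : suppFun A d = (rA : EReal)) (hH : EMetric.hausdorffEdist C A ≠ ⊤) :
    suppFun C d ≤ ((rA + (EMetric.hausdorffEdist C A).toReal : ℝ) : EReal) := by
  apply suppFun_le
  intro x hx
  refine le_of_forall_pos_le_add fun ε hε => ?_
  have h1 : EMetric.infEdist x A ≤ EMetric.hausdorffEdist C A :=
    EMetric.infEdist_le_hausdorffEdist_of_mem hx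
  have h2 : EMetric.infEdist x A < EMetric.hausdorffEdist C A + ENNReal.ofReal ε :=
    h1.trans_lt (ENNReal.lt_add_right hH (ENNReal.ofReal_pos.2 hε).ne')
  obtain ⟨y, hy, hxy⟩ := EMetric.infEdist_lt_iff.1 h2
  have hyr : ⟪d, y⟫_ℝ ≤ rA := EReal.coe_le_coe_iff.1 (hrA ▸ coe_le_suppFun hy d)
  have hdist : ‖x - y‖ ≤ (EMetric.hausdorffEdist C A).toReal + ε := by
    have := (ENNReal.toReal_lt_toReal (edist_ne_top x y)
      (by simp [ENNReal.add_ne_top, hH])).2 hxy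
    rw [ENNReal.toReal_add hH ENNReal.ofReal_ne_top, ENNReal.toReal_ofReal hε.le] at this
    rw [← dist_eq_norm, dist_edist]
    linarith
  have hinner : ⟪d, x - y⟫_ℝ ≤ ‖x - y‖ := by
    calc ⟪d, x - y⟫_ℝ ≤ ‖d‖ * ‖x - y‖ := real_inner_le_norm d (x - y)
      _ ≤ 1 * ‖x - y‖ := mul_le_mul_of_nonneg_right hd (norm_nonneg _)
      _ = ‖x - y‖ := one_mul _
  have := inner_sub_right (𝕜 := ℝ) d x y
  linarith [this ▸ hinner]

end Aux

/-- if two nonempty closed convex sets have support functions with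
identical domains `D`, their Hausdorff distance is `sup_{d ∈ D ∩ B} |σ_{C¹}(d) − σ_{C²}(d)|`. -/
theorem hausdorffEdist_eq_sup_abs_suppFun_sub {n : ℕ}
    (C₁ C₂ : Set (EuclideanSpace ℝ (Fin n)))
    (h₁ne : C₁.Nonempty) (h₁cl : IsClosed C₁) (h₁conv : Convex ℝ C₁)
    (h₂ne : C₂.Nonempty) (h₂cl : IsClosed C₂) (h₂conv : Convex ℝ C₂)
    (hdom : suppDom C₁ = suppDom C₂) :
    EMetric.hausdorffEdist C₁ C₂ =
      ⨆ d ∈ suppDom C₁ ∩ closedBall 0 1, (suppFun C₁ d - suppFun C₂ d).abs := by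
  apply le_antisymm
  · apply EMetric.hausdorffEdist_le_of_infEdist
    · intro x hx
      obtain ⟨d, hd1, r₂, hr₂, hrx, hinf⟩ := exists_sep h₂ne h₂cl h₂conv x
      have hd₂ : d ∈ suppDom C₂ := by
        simp only [suppDom, Set.mem_setOf_eq, hr₂]; exact EReal.coe_lt_top _
      have hd₁ : d ∈ suppDom C₁ := hdom ▸ hd₂
      have h1top : suppFun C₁ d ≠ ⊤ := hd₁.ne
      have hr₁ : suppFun C₁ d = ((suppFun C₁ d).toReal : EReal) :=
        (EReal.coe_toReal h1top (suppFun_ne_bot h₁ne d)).symm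
      set r₁ := (suppFun C₁ d).toReal with hr₁def
      have hxr₁ : ⟪d, x⟫_ℝ ≤ r₁ := EReal.coe_le_coe_iff.1 (hr₁ ▸ coe_le_suppFun hx d)
      calc EMetric.infEdist x C₂ ≤ ENNReal.ofReal (⟪d, x⟫_ℝ - r₂) := hinf
        _ ≤ ENNReal.ofReal |r₁ - r₂| :=
            ENNReal.ofReal_le_ofReal (le_trans (by linarith) (le_abs_self _))
        _ = (suppFun C₁ d - suppFun C₂ d).abs := by
            rw [hr₁, hr₂, ← EReal.coe_sub, EReal.abs_def]
        _ ≤ _ := le_iSup₂_of_le d ⟨hd₁, by simpa [mem_closedBall, dist_eq_norm] using hd1⟩ le_rfl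
    · intro y hy
      obtain ⟨d, hd1, r₁, hr₁, hry, hinf⟩ := exists_sep h₁ne h₁cl h₁conv y
      have hd₁ : d ∈ suppDom C₁ := by
        simp only [suppDom, Set.mem_setOf_eq, hr₁]; exact EReal.coe_lt_top _
      have hd₂ : d ∈ suppDom C₂ := hdom ▸ hd₁
      have h2top : suppFun C₂ d ≠ ⊤ := hd₂.ne
      have hr₂ : suppFun C₂ d = ((suppFun C₂ d).toReal : EReal) :=
        (EReal.coe_toReal h2top (suppFun_ne_bot h₂ne d)).symm
      set r₂ := (suppFun C₂ d).toReal with hr₂def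
      have hyr₂ : ⟪d, y⟫_ℝ ≤ r₂ := EReal.coe_le_coe_iff.1 (hr₂ ▸ coe_le_suppFun hy d)
      calc EMetric.infEdist y C₁ ≤ ENNReal.ofReal (⟪d, y⟫_ℝ - r₁) := hinf
        _ ≤ ENNReal.ofReal |r₁ - r₂| := by
            apply ENNReal.ofReal_le_ofReal
            calc ⟪d, y⟫_ℝ - r₁ ≤ r₂ - r₁ := by linarith
              _ ≤ |r₂ - r₁| := le_abs_self _
              _ = |r₁ - r₂| := abs_sub_comm _ _
        _ = (suppFun C₁ d - suppFun C₂ d).abs := by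
            rw [hr₁, hr₂, ← EReal.coe_sub, EReal.abs_def]
        _ ≤ _ := le_iSup₂_of_le d ⟨hd₁, by simpa [mem_closedBall, dist_eq_norm] using hd1⟩ le_rfl
  · by_cases hH : EMetric.hausdorffEdist C₁ C₂ = ⊤
    · rw [hH]; exact le_top
    refine iSup₂_le fun d hd => ?_
    obtain ⟨hd₁, hdB⟩ := hd
    have hd₂ : d ∈ suppDom C₂ := hdom ▸ hd₁
    have hd1 : ‖d‖ ≤ 1 := by simpa [mem_closedBall, dist_eq_norm] using hdB
    have hr₁ : suppFun C₁ d = ((suppFun C₁ d).toReal : EReal) :=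
      (EReal.coe_toReal hd₁.ne (suppFun_ne_bot h₁ne d)).symm
    have hr₂ : suppFun C₂ d = ((suppFun C₂ d).toReal : EReal) :=
      (EReal.coe_toReal hd₂.ne (suppFun_ne_bot h₂ne d)).symm
    set r₁ := (suppFun C₁ d).toReal
    set r₂ := (suppFun C₂ d).toReal
    set h := (EMetric.hausdorffEdist C₁ C₂).toReal with hhdef
    have hH' : EMetric.hausdorffEdist C₂ C₁ ≠ ⊤ := by
      rwa [EMetric.hausdorffEdist, Metric.hausdorffEDist_comm]
    have h12 : r₁ ≤ r₂ + h := by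
      have := suppFun_le_add_haus hd1 hr₂ hH
      rw [hr₁] at this
      exact EReal.coe_le_coe_iff.1 this
    have h21 : r₂ ≤ r₁ + h := by
      have := suppFun_le_add_haus hd1 hr₁ hH'
      rw [hr₂, EMetric.hausdorffEdist, Metric.hausdorffEDist_comm] at this
      exact EReal.coe_le_coe_iff.1 this
    have habs : |r₁ - r₂| ≤ h := abs_sub_le_iff.2 ⟨by linarith, by linarith⟩
    calc (suppFun C₁ d - suppFun C₂ d).abs = ENNReal.ofReal |r₁ - r₂| := by
          rw [hr₁, hr₂, ← EReal.coe_sub, EReal.abs_def]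
      _ ≤ ENNReal.ofReal h := ENNReal.ofReal_le_ofReal habs
      _ = EMetric.hausdorffEdist C₁ C₂ := ENNReal.ofReal_toReal hH
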